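/- For all u₁, u₂, v₁, v₂ ∈ 𝕍, the pair (u₁,u₂) is lexicographically smaller than (v₁,v₂) (i.e., u₁ < v₁, or u₁ = v₁ and u₂ < v₂) if and only if (u₁ ≫ u₂) < (v₁ ≫ v₂), where < on 𝕍 is the lexicographic order on lists induced by F < 0 < T. -/

import Mathlib

/-- The three truth symbols F, 0 (Z), T. -/
inductive TSym : Type
  | F | Z | T
deriving DecidableEq

open TSym

/-- The operation u ≫ v on lists of symbols. -/
def lexOp (u v : List TSym) : List TSym :=
  if u = [F] ∧ v = [F] then [F]
  else if u = [T] ∧ v = [T] then [T]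
  else Z :: (u ++ v)

/-- The truth domain 𝕍 as an inductive predicate. -/
inductive Vmem : List TSym → Prop
  | F : Vmem [F]
  | T : Vmem [T]
  | op {u v : List TSym} : Vmem u → Vmem v → Vmem (lexOp u v)

def symRank : TSym → ℕ
  | F => 0 | Z => 1 | T => 2

/-- The order F < 0 < T on symbols. -/
def symLt (a b : TSym) : Prop := symRank a < symRank b

/-- Lexicographic order on lists induced by F < 0 < T. -/
def listLt (u v : List TSym) : Prop := List.Lex symLt u v

/-- Pointwise negation F ↦ T, T ↦ F, 0 ↦ 0. -/
def symNeg : TSym → TSym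
  | F => T | T => F | Z => Z

def negList (v : List TSym) : List TSym := v.map symNeg

def symVal : TSym → ℚ
  | F => -1 | Z => 0 | T => 1

/-- val([u₁,…,u_n]) = Σ symVal(u_i) · (1/3)^(i-1). -/
def val : List TSym → ℚ
  | [] => 0
  | a :: t => symVal a + val t / 3

open Classical in
/-- Lexicographic minimum. -/
noncomputable def minL (u v : List TSym) : List TSym := if listLt u v then u else v

open Classical in
/-- Lexicographic maximum. -/
noncomputable def maxL (u v : List TSym) : List TSym := if listLt u v then v else u

instance : IsTrichotomous TSym symLt :=
  ⟨by intro a b; cases a <;> cases b <;> simp [symLt, symRank]⟩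

instance : IsAsymm TSym symLt :=
  ⟨by intro a b; cases a <;> cases b <;> simp [symLt, symRank]⟩

lemma vmem_form {v : List TSym} (h : Vmem v) :
    v = [F] ∨ v = [T] ∨ ∃ c d, Vmem c ∧ Vmem d ∧ v = Z :: (c ++ d) := by
  induction h with
  | F => exact Or.inl rfl
  | T => exact Or.inr (Or.inl rfl)
  | @op c d hc hd _ _ =>
    unfold lexOp
    split
    · exact Or.inl rfl
    · split
      · exact Or.inr (Or.inl rfl)
      · exact Or.inr (Or.inr ⟨c, d, hc, hd, rfl⟩)

/-- 𝕍 is prefix-free. -/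
lemma vmem_prefix {u : List TSym} (hu : Vmem u) :
    ∀ {v : List TSym}, Vmem v → (u <+: v ∨ v <+: u) → u = v := by
  induction hu with
  | F =>
    intro v hv hp
    rcases vmem_form hv with rfl | rfl | ⟨c, d, _, _, rfl⟩
    · rfl
    · rcases hp with ⟨t, ht⟩ | ⟨t, ht⟩ <;> simp at ht
    · rcases hp with ⟨t, ht⟩ | ⟨t, ht⟩ <;> simp at ht
  | T =>
    intro v hv hp
    rcases vmem_form hv with rfl | rfl | ⟨c, d, _, _, rfl⟩
    · rcases hp with ⟨t, ht⟩ | ⟨t, ht⟩ <;> simp at ht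
    · rfl
    · rcases hp with ⟨t, ht⟩ | ⟨t, ht⟩ <;> simp at ht
  | @op a b ha hb iha ihb =>
    intro v hv hp
    by_cases hFF : a = [F] ∧ b = [F]
    · obtain ⟨rfl, rfl⟩ := hFF
      simp only [lexOp, if_pos (⟨rfl, rfl⟩ : ([F] : List TSym) = [F] ∧ ([F] : List TSym) = [F])]
        at hp ⊢
      rcases vmem_form hv with rfl | rfl | ⟨c, d, _, _, rfl⟩
      · rfl
      · rcases hp with ⟨t, ht⟩ | ⟨t, ht⟩ <;> simp at ht
      · rcases hp with ⟨t, ht⟩ | ⟨t, ht⟩ <;> simp at ht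
    · by_cases hTT : a = [T] ∧ b = [T]
      · obtain ⟨rfl, rfl⟩ := hTT
        simp only [lexOp] at hp ⊢
        norm_num at hp ⊢
        rcases vmem_form hv with rfl | rfl | ⟨c, d, _, _, rfl⟩
        · rcases hp with ⟨t, ht⟩ | ⟨t, ht⟩ <;> simp at ht
        · rfl
        · rcases hp with ⟨t, ht⟩ | ⟨t, ht⟩ <;> simp at ht
      · have hZ : lexOp a b = Z :: (a ++ b) := by simp [lexOp, hFF, hTT]
        rw [hZ] at hp ⊢
        rcases vmem_form hv with rfl | rfl | ⟨c, d, hc, hd, rfl⟩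
        · rcases hp with ⟨t, ht⟩ | ⟨t, ht⟩ <;> simp at ht
        · rcases hp with ⟨t, ht⟩ | ⟨t, ht⟩ <;> simp at ht
        · have hab : a ++ b <+: c ++ d ∨ c ++ d <+: a ++ b := by
            rcases hp with h | h
            · exact Or.inl (by simpa using h)
            · exact Or.inr (by simpa using h)
          have hac : a <+: c ∨ c <+: a := by
            rcases hab with h | h
            · exact List.prefix_or_prefix_of_prefix
                ((List.prefix_append a b).trans h) (List.prefix_append c d)
            · exact (List.prefix_or_prefix_of_prefix
                ((List.prefix_append c d).trans h) (List.prefix_append a b)).symm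
          have hac' : a = c := iha hc hac
          subst hac'
          have hbd : b <+: d ∨ d <+: b := by
            rcases hab with h | h
            · exact Or.inl ((List.prefix_append_right_inj a).mp h)
            · exact Or.inr ((List.prefix_append_right_inj a).mp h)
          have : b = d := ihb hd hbd
          rw [this]

lemma listLt_asymm {u v : List TSym} (h : listLt u v) : ¬ listLt v u :=
  fun h' => (@List.Lex.asymm _ symLt ⟨by intro a b; cases a <;> cases b <;> simp [symLt, symRank]⟩).asymm u v h h'

lemma listLt_irrefl (u : List TSym) : ¬ listLt u u := fun h => listLt_asymm h h

/-- [F] is minimal over 𝕍. -/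
lemma not_lt_F {v : List TSym} (hv : Vmem v) : ¬ listLt v [F] := by
  intro h
  rcases vmem_form hv with rfl | rfl | ⟨c, d, _, _, rfl⟩
  · exact listLt_irrefl _ h
  all_goals (cases h with
    | rel h => simp [symLt, symRank] at h)

/-- [T] is maximal over 𝕍. -/
lemma not_T_lt {v : List TSym} (hv : Vmem v) : ¬ listLt [T] v := by
  intro h
  rcases vmem_form hv with rfl | rfl | ⟨c, d, _, _, rfl⟩
  · cases h with
    | rel h => simp [symLt, symRank] at h
  · exact listLt_irrefl _ h
  · cases h with
    | rel h => simp [symLt, symRank] at h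

/-- Key append lemma: a non-prefix lex inequality survives appending. -/
lemma lex_append_of_not_prefix :
    ∀ {s t : List TSym}, List.Lex symLt s t → ¬ s <+: t →
      ∀ (u v : List TSym), List.Lex symLt (s ++ u) (t ++ v) := by
  intro s t h
  induction h with
  | nil => intro hp; exact absurd (List.nil_prefix) hp
  | @cons a l₁ l₂ h ih =>
    intro hp u v
    exact List.Lex.cons (ih (fun hq => hp (by simpa using hq)) u v)
  | rel h => intro _ u v; exact List.Lex.rel h

lemma vmem_lt_forward {u₁ u₂ v₁ v₂ : List TSym}
    (h₁ : Vmem u₁) (h₂ : Vmem u₂) (h₃ : Vmem v₁) (h₄ : Vmem v₂)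
    (h : listLt u₁ v₁ ∨ (u₁ = v₁ ∧ listLt u₂ v₂)) :
    listLt (lexOp u₁ u₂) (lexOp v₁ v₂) := by
  by_cases huFF : u₁ = [F] ∧ u₂ = [F]
  · -- lexOp u₁ u₂ = [F]
    obtain ⟨rfl, rfl⟩ := huFF
    have hu : lexOp [F] [F] = [F] := by simp [lexOp]
    rw [hu]
    -- show lexOp v₁ v₂ starts with Z or T, or derive contradiction
    by_cases hvFF : v₁ = [F] ∧ v₂ = [F]
    · obtain ⟨rfl, rfl⟩ := hvFF
      rcases h with h | ⟨_, h⟩ <;> exact absurd h (listLt_irrefl _)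
    · by_cases hvTT : v₁ = [T] ∧ v₂ = [T]
      · obtain ⟨rfl, rfl⟩ := hvTT
        simp only [lexOp]; norm_num
        exact List.Lex.rel (by simp [symLt, symRank])
      · have : lexOp v₁ v₂ = Z :: (v₁ ++ v₂) := by simp [lexOp, hvFF, hvTT]
        rw [this]
        exact List.Lex.rel (by simp [symLt, symRank])
  · by_cases huTT : u₁ = [T] ∧ u₂ = [T]
    · -- lexOp u₁ u₂ = [T]: impossible, since then [T] < v₁ or [T] < v₂
      obtain ⟨rfl, rfl⟩ := huTT
      rcases h with h | ⟨rfl, h⟩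
      · exact absurd h (not_T_lt h₃)
      · exact absurd h (not_T_lt h₄)
    · have hu : lexOp u₁ u₂ = Z :: (u₁ ++ u₂) := by simp [lexOp, huFF, huTT]
      rw [hu]
      by_cases hvFF : v₁ = [F] ∧ v₂ = [F]
      · -- lexOp v₁ v₂ = [F]: impossible since u₁ < [F] or u₂ < [F]
        obtain ⟨rfl, rfl⟩ := hvFF
        rcases h with h | ⟨rfl, h⟩
        · exact absurd h (not_lt_F h₁)
        · exact absurd h (not_lt_F h₂)
      · by_cases hvTT : v₁ = [T] ∧ v₂ = [T]
        · obtain ⟨rfl, rfl⟩ := hvTT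
          simp only [lexOp]; norm_num
          exact List.Lex.rel (by simp [symLt, symRank])
        · have hv : lexOp v₁ v₂ = Z :: (v₁ ++ v₂) := by simp [lexOp, hvFF, hvTT]
          rw [hv]
          apply List.Lex.cons
          rcases h with h | ⟨rfl, h⟩
          · have hne : ¬ u₁ <+: v₁ := by
              intro hp
              have := vmem_prefix h₁ h₃ (Or.inl hp)
              subst this
              exact listLt_irrefl _ h
            exact lex_append_of_not_prefix h hne u₂ v₂
          · exact List.Lex.append_left symLt h _

theorem lexOp_lexicographic (u₁ u₂ v₁ v₂ : List TSym)
    (h₁ : Vmem u₁) (h₂ : Vmem u₂) (h₃ : Vmem v₁) (h₄ : Vmem v₂) :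
    (listLt u₁ v₁ ∨ (u₁ = v₁ ∧ listLt u₂ v₂)) ↔ listLt (lexOp u₁ u₂) (lexOp v₁ v₂) := by
  constructor
  · exact vmem_lt_forward h₁ h₂ h₃ h₄
  · intro h
    rcases trichotomous_of (List.Lex symLt) u₁ v₁ with h' | rfl | h'
    · exact Or.inl h'
    · rcases trichotomous_of (List.Lex symLt) u₂ v₂ with h' | rfl | h'
      · exact Or.inr ⟨rfl, h'⟩
      · exact absurd h (listLt_irrefl _)
      · exact absurd h (listLt_asymm (vmem_lt_forward h₃ h₄ h₁ h₂ (Or.inr ⟨rfl, h'⟩)))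
    · exact absurd h (listLt_asymm (vmem_lt_forward h₃ h₄ h₁ h₂ (Or.inl h')))
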